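/- Let Y solve dY_t/dt = -A Y_t - H U_t on [0,T] and let X solve the integral equation X_t = X_0 + ∫_0^t A^T X_τ dτ + B_t for a function B of bounded variation with B_0 = 0, where all functions are deterministic and piecewise continuous. Then Y_T^T X_T = Y_0^T X_0 - ∫_0^T U_t^T H^T X_t dt + ∫_0^T Y_t^T dB_t, where the last integral is a Riemann–Stieltjes integral, provided Y has no common discontinuities with B. -/

import Mathlib

open Matrix Finset intervalIntegral

/-- Riemann–Stieltjes integral `∫_a^b f dg = I`, as the limit of left-endpoint
Riemann–Stieltjes sums over partitions of mesh tending to zero. -/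
def IsRSIntegral (f g : ℝ → ℝ) (a b I : ℝ) : Prop :=
  ∀ ε > 0, ∃ δ > 0, ∀ (n : ℕ) (t : ℕ → ℝ),
    0 < n → t 0 = a → t n = b →
    (∀ i < n, t i < t (i + 1)) →
    (∀ i < n, t (i + 1) - t i < δ) →
    |(∑ i ∈ Finset.range n, f (t i) * (g (t (i + 1)) - g (t i))) - I| < ε

section AuxRS
open MeasureTheory Set

lemma rs_aux {T : ℝ} (hT : 0 < T) {f g x w b : ℝ → ℝ} {M : ℝ} (hM0 : 0 ≤ M)
    (hf : ∀ t ∈ Icc (0:ℝ) T, HasDerivAt f (g t) t)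
    (hg : ContinuousOn g (Icc 0 T))
    (hgM : ∀ t ∈ Icc (0:ℝ) T, |g t| ≤ M)
    (hx : IntervalIntegrable x volume 0 T)
    (hw : IntervalIntegrable w volume 0 T)
    (hbeq : ∀ t ∈ Icc (0:ℝ) T, x t = x 0 + (∫ τ in (0:ℝ)..t, w τ) + b t)
    (hbv : BoundedVariationOn b (Icc 0 T)) :
    IsRSIntegral f b 0 T (f T * x T - f 0 * x 0 - (∫ t in (0:ℝ)..T, g t * x t)
      - (∫ t in (0:ℝ)..T, f t * w t)) := by
  have huIcc : uIcc (0:ℝ) T = Icc 0 T := Set.uIcc_of_le hT.le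
  have hfc : ContinuousOn f (Icc 0 T) := fun t ht =>
    (hf t ht).continuousAt.continuousWithinAt
  -- b is interval integrable on subintervals of [0,T]
  have hb_int : ∀ u v, u ∈ Icc (0:ℝ) T → v ∈ Icc (0:ℝ) T → u ≤ v →
      IntervalIntegrable b volume u v := by
    intro u v hu hv huv
    have hsub : uIcc u v ⊆ Icc 0 T := by
      rw [Set.uIcc_of_le huv]; exact Icc_subset_Icc hu.1 hv.2
    have hx' : IntervalIntegrable x volume u v := hx.mono_set (huIcc ▸ hsub)
    have hprim : ContinuousOn (fun s => ∫ τ in (0:ℝ)..s, w τ) (uIcc u v) := by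
      have h0 := intervalIntegral.continuousOn_primitive_interval'
        (b₁ := (0:ℝ)) (b₂ := T) hw (by rw [huIcc]; exact Set.left_mem_Icc.mpr hT.le)
      rw [huIcc] at h0
      exact h0.mono hsub
    have : IntervalIntegrable (fun s => x s - (x 0 + ∫ τ in (0:ℝ)..s, w τ)) volume u v :=
      hx'.sub ((_root_.intervalIntegrable_const).add (hprim.intervalIntegrable))
    apply this.congr
    intro s hs
    beta_reduce
    have hs' : s ∈ Icc 0 T := hsub (uIoc_subset_uIcc hs)
    rw [hbeq s hs']; ring
  intro ε hε
  set W : ℝ := ∫ s in (0:ℝ)..T, |w s| with hW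
  have hW0 : 0 ≤ W := intervalIntegral.integral_nonneg hT.le (fun u _ => abs_nonneg _)
  set Vt : ℝ := (eVariationOn b (Icc 0 T)).toReal with hVt
  have hVt0 : 0 ≤ Vt := ENNReal.toReal_nonneg
  set K : ℝ := M * (2 * W + Vt) + 1 with hK
  have hK1 : 1 ≤ K := by nlinarith
  have hKpos : 0 < K := by linarith
  refine ⟨ε / K, div_pos hε hKpos, ?_⟩
  intro n t hn ht0 htn hlt hmesh
  set δ : ℝ := ε / K with hδ
  have hδpos : 0 < δ := div_pos hε hKpos
  have hmono : ∀ i j, i ≤ j → j ≤ n → t i ≤ t j := by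
    intro i j hij
    induction j, hij using Nat.le_induction with
    | base => intro _; exact le_rfl
    | succ j hij ih =>
      intro hj
      exact le_trans (ih (Nat.le_of_succ_le hj)) (le_of_lt (hlt j (Nat.lt_of_succ_le hj)))
  have hmem : ∀ i, i ≤ n → t i ∈ Icc (0:ℝ) T := by
    intro i hi
    exact ⟨ht0 ▸ hmono 0 i (Nat.zero_le _) hi, htn ▸ hmono i n hi le_rfl⟩
  -- integrabilities on adjacent intervals
  have hsubI : ∀ i, i < n → uIcc (t i) (t (i+1)) ⊆ Icc 0 T := by
    intro i hi
    rw [Set.uIcc_of_le (hlt i hi).le]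
    exact Icc_subset_Icc (hmem i hi.le).1 (hmem (i+1) hi).2
  have hint_gx : ∀ i < n, IntervalIntegrable (fun s => g s * x s) volume (t i) (t (i+1)) :=
    fun i hi => ((hx.mono_set (huIcc ▸ hsubI i hi)).continuousOn_mul (hg.mono (hsubI i hi)))
  have hint_fw : ∀ i < n, IntervalIntegrable (fun s => f s * w s) volume (t i) (t (i+1)) :=
    fun i hi => ((hw.mono_set (huIcc ▸ hsubI i hi)).continuousOn_mul (hfc.mono (hsubI i hi)))
  have hint_absw : ∀ i < n, IntervalIntegrable (fun s => |w s|) volume (t i) (t (i+1)) :=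
    fun i hi => (hw.mono_set (huIcc ▸ hsubI i hi)).abs
  set Ei : ℕ → ℝ := fun i => f (t i) * (b (t (i+1)) - b (t i))
      - (f (t (i+1)) * x (t (i+1)) - f (t i) * x (t i))
      + (∫ s in t i..t (i+1), g s * x s) + (∫ s in t i..t (i+1), f s * w s) with hEi
  have hsum : (∑ i ∈ Finset.range n, f (t i) * (b (t (i+1)) - b (t i)))
      - (f T * x T - f 0 * x 0 - (∫ s in (0:ℝ)..T, g s * x s)
          - (∫ s in (0:ℝ)..T, f s * w s)) = ∑ i ∈ Finset.range n, Ei i := by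
    have h1 : ∑ i ∈ Finset.range n, (∫ s in t i..t (i+1), g s * x s)
        = ∫ s in (0:ℝ)..T, g s * x s := by
      rw [← ht0, ← htn]; exact intervalIntegral.sum_integral_adjacent_intervals hint_gx
    have h2 : ∑ i ∈ Finset.range n, (∫ s in t i..t (i+1), f s * w s)
        = ∫ s in (0:ℝ)..T, f s * w s := by
      rw [← ht0, ← htn]; exact intervalIntegral.sum_integral_adjacent_intervals hint_fw
    have h3 : ∑ i ∈ Finset.range n, (f (t (i+1)) * x (t (i+1)) - f (t i) * x (t i))
        = f T * x T - f 0 * x 0 := by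
      rw [Finset.sum_range_sub (fun i => f (t i) * x (t i)), ht0, htn]
    simp only [hEi]
    rw [Finset.sum_add_distrib, Finset.sum_add_distrib, Finset.sum_sub_distrib, h1, h2, h3]
    ring
  -- per-interval bound
  have hEbound : ∀ i < n, |Ei i| ≤ M * δ * (2 * (∫ s in t i..t (i+1), |w s|)
      + (eVariationOn b (Icc (t i) (t (i+1)))).toReal) := by
    intro i hi
    set u := t i with hu
    set v := t (i+1) with hv
    have huv : u < v := hlt i hi
    have humem : u ∈ Icc (0:ℝ) T := hmem i hi.le
    have hvmem : v ∈ Icc (0:ℝ) T := hmem (i+1) hi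
    have hd : v - u < δ := hmesh i hi
    have hsub : Icc u v ⊆ Icc (0:ℝ) T := Icc_subset_Icc humem.1 hvmem.2
    have hsub' : uIcc u v ⊆ Icc (0:ℝ) T := by rw [Set.uIcc_of_le huv.le]; exact hsub
    set Vi : ℝ := (eVariationOn b (Icc u v)).toReal with hVi
    have hVi0 : 0 ≤ Vi := ENNReal.toReal_nonneg
    have hbvi : BoundedVariationOn b (Icc u v) :=
      ne_top_of_le_ne_top hbv (eVariationOn.mono b hsub)
    set Iw : ℝ := ∫ s in u..v, |w s| with hIw
    have hIw0 : 0 ≤ Iw := intervalIntegral.integral_nonneg huv.le (fun s _ => abs_nonneg _)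
    have hw_uv : IntervalIntegrable w volume u v := hw.mono_set (huIcc ▸ hsub')
    have hx_uv : IntervalIntegrable x volume u v := hx.mono_set (huIcc ▸ hsub')
    have hb_uv : IntervalIntegrable b volume u v := hb_int u v humem hvmem huv.le
    have hg_uv : ContinuousOn g (uIcc u v) := hg.mono hsub'
    have hf_uv : ContinuousOn f (uIcc u v) := hfc.mono hsub'
    -- FTC
    have hFTC : ∀ s ∈ Icc u v, f s - f u = ∫ τ in u..s, g τ := by
      intro s hs
      have hsub2 : uIcc u s ⊆ Icc (0:ℝ) T := by
        rw [Set.uIcc_of_le hs.1]; exact (Icc_subset_Icc_right hs.2).trans hsub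
      rw [intervalIntegral.integral_eq_sub_of_hasDerivAt
        (fun τ hτ => hf τ (hsub2 hτ)) ((hg.mono hsub2).intervalIntegrable)]
    have hFTCv : f v - f u = ∫ τ in u..v, g τ := hFTC v ⟨huv.le, le_rfl⟩
    -- splitting of x
    have hxsplit : ∀ s ∈ Icc u v, x v - x s = (∫ τ in s..v, w τ) + (b v - b s) := by
      intro s hs
      have hsmem : s ∈ Icc (0:ℝ) T := hsub hs
      rw [hbeq v hvmem, hbeq s hsmem]
      have : (∫ τ in (0:ℝ)..v, w τ) - (∫ τ in (0:ℝ)..s, w τ) = ∫ τ in s..v, w τ :=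
        intervalIntegral.integral_interval_sub_left
          (hw.mono_set (by rw [huIcc, Set.uIcc_of_le hvmem.1]; exact Icc_subset_Icc le_rfl hvmem.2))
          (hw.mono_set (by rw [huIcc, Set.uIcc_of_le hsmem.1]; exact Icc_subset_Icc le_rfl hsmem.2))
      linarith [this]
    -- the error function
    set φ : ℝ → ℝ := fun s => (f s - f u) * w s
        - g s * ((∫ τ in s..v, w τ) + (b v - b s)) with hφ
    have hprim_cont : ContinuousOn (fun s => ∫ τ in s..v, w τ) (uIcc u v) := by
      have h1 : ContinuousOn (fun s => ∫ τ in u..s, w τ) (uIcc u v) :=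
        intervalIntegral.continuousOn_primitive_interval' hw_uv Set.left_mem_uIcc
      have h2 : ∀ s ∈ uIcc u v, (∫ τ in s..v, w τ) = (∫ τ in u..v, w τ) - ∫ τ in u..s, w τ := by
        intro s hs
        rw [Set.uIcc_of_le huv.le] at hs
        have hws : IntervalIntegrable w volume u s := hw_uv.mono_set
          (by rw [Set.uIcc_of_le hs.1, Set.uIcc_of_le huv.le]
              exact Icc_subset_Icc le_rfl hs.2)
        have hwsv : IntervalIntegrable w volume s v := hw_uv.mono_set
          (by rw [Set.uIcc_of_le hs.2, Set.uIcc_of_le huv.le]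
              exact Icc_subset_Icc hs.1 le_rfl)
        rw [eq_sub_iff_add_eq, add_comm]
        exact intervalIntegral.integral_add_adjacent_intervals hws hwsv
      exact (continuousOn_const.sub h1).congr h2
    have hφint : IntervalIntegrable φ volume u v := by
      apply IntervalIntegrable.sub
      · exact hw_uv.continuousOn_mul (hf_uv.sub continuousOn_const)
      · have : IntervalIntegrable (fun s => (∫ τ in s..v, w τ) + (b v - b s)) volume u v :=
          (hprim_cont.intervalIntegrable).add ((_root_.intervalIntegrable_const).sub hb_uv)
        exact this.continuousOn_mul hg_uv
    -- Ei = ∫ φ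
    have hEieq : Ei i = ∫ s in u..v, φ s := by
      have hstep : ∀ s ∈ uIcc u v, φ s = (f s - f u) * w s - g s * (x v - x s) := by
        intro s hs
        rw [Set.uIcc_of_le huv.le] at hs
        simp only [hφ]
        rw [← hxsplit s hs]
      have hint1 : IntervalIntegrable (fun s => (f s - f u) * w s) volume u v :=
        hw_uv.continuousOn_mul (hf_uv.sub continuousOn_const)
      have hint2 : IntervalIntegrable (fun s => g s * (x v - x s)) volume u v :=
        ((_root_.intervalIntegrable_const (c := x v)).sub hx_uv).continuousOn_mul hg_uv
      have e0 : ∫ s in u..v, φ s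
          = (∫ s in u..v, (f s - f u) * w s) - ∫ s in u..v, g s * (x v - x s) := by
        rw [← intervalIntegral.integral_sub hint1 hint2]
        exact intervalIntegral.integral_congr (fun s hs => by rw [hstep s hs])
      have e1 : ∫ s in u..v, (f s - f u) * w s
          = (∫ s in u..v, f s * w s) - f u * ∫ s in u..v, w s := by
        rw [← intervalIntegral.integral_const_mul,
          ← intervalIntegral.integral_sub (hint_fw i hi) (hw_uv.const_mul (f u))]
        congr 1; funext s; ring
      have e2 : ∫ s in u..v, g s * (x v - x s)
          = (f v - f u) * x v - ∫ s in u..v, g s * x s := by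
        have : (fun s => g s * (x v - x s)) = fun s => g s * x v - g s * x s := by
          funext s; ring
        rw [this, intervalIntegral.integral_sub ((hg_uv.intervalIntegrable).mul_const (x v))
          (hint_gx i hi), intervalIntegral.integral_mul_const, ← hFTCv]
      have hbvu : b v - b u = (x v - x u) - ∫ τ in u..v, w τ := by
        have := hxsplit u ⟨le_rfl, huv.le⟩
        linarith
      rw [e0, e1, e2]
      simp only [hEi]
      rw [hbvu]
      ring
    -- pointwise bound on φ
    have hφb : ∀ s ∈ Icc u v, |φ s| ≤ M * δ * |w s| + (M * Iw + M * Vi) := by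
      intro s hs
      have hsmem : s ∈ Icc (0:ℝ) T := hsub hs
      have hsubs : uIcc u s ⊆ Icc (0:ℝ) T := by
        rw [Set.uIcc_of_le hs.1]
        exact (Icc_subset_Icc_right hs.2).trans hsub
      have h1 : |f s - f u| ≤ M * δ := by
        rw [hFTC s hs]
        calc |∫ τ in u..s, g τ| ≤ ∫ τ in u..s, |g τ| :=
              intervalIntegral.abs_integral_le_integral_abs hs.1
          _ ≤ ∫ τ in u..s, M := by
              apply intervalIntegral.integral_mono_on hs.1
              · exact ((hg.mono hsubs).intervalIntegrable).abs
              · exact _root_.intervalIntegrable_const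
              · intro τ hτ
                exact hgM τ (hsub ((Icc_subset_Icc_right hs.2) hτ))
          _ = (s - u) * M := by rw [intervalIntegral.integral_const]; simp [smul_eq_mul]
          _ ≤ δ * M := by
              apply mul_le_mul_of_nonneg_right _ hM0
              have : s ≤ v := hs.2
              linarith
          _ = M * δ := mul_comm _ _
      have h2 : |∫ τ in s..v, w τ| ≤ Iw := by
        have hw1 : IntervalIntegrable w volume u s := by
          apply hw_uv.mono_set
          rw [Set.uIcc_of_le hs.1, Set.uIcc_of_le huv.le]
          exact Icc_subset_Icc le_rfl hs.2
        have hw2 : IntervalIntegrable w volume s v := by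
          apply hw_uv.mono_set
          rw [Set.uIcc_of_le hs.2, Set.uIcc_of_le huv.le]
          exact Icc_subset_Icc hs.1 le_rfl
        calc |∫ τ in s..v, w τ| ≤ ∫ τ in s..v, |w τ| :=
              intervalIntegral.abs_integral_le_integral_abs hs.2
          _ ≤ Iw := by
              have hsplit : (∫ τ in u..s, |w τ|) + (∫ τ in s..v, |w τ|) = Iw :=
                intervalIntegral.integral_add_adjacent_intervals hw1.abs hw2.abs
              have hnn : 0 ≤ ∫ τ in u..s, |w τ| :=
                intervalIntegral.integral_nonneg hs.1 (fun _ _ => abs_nonneg _)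
              linarith
      have h3 : |b v - b s| ≤ Vi := by
        rw [← Real.dist_eq]
        exact hbvi.dist_le ⟨huv.le, le_rfl⟩ hs
      have h4 : |g s| ≤ M := hgM s hsmem
      calc |φ s| ≤ |(f s - f u) * w s| + |g s * ((∫ τ in s..v, w τ) + (b v - b s))| :=
            abs_sub _ _
        _ = |f s - f u| * |w s| + |g s| * |(∫ τ in s..v, w τ) + (b v - b s)| := by
            rw [abs_mul, abs_mul]
        _ ≤ M * δ * |w s| + M * (Iw + Vi) := by
            apply add_le_add
            · exact mul_le_mul_of_nonneg_right h1 (abs_nonneg _)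
            · apply mul_le_mul h4 _ (abs_nonneg _) hM0
              calc |(∫ τ in s..v, w τ) + (b v - b s)| ≤ |∫ τ in s..v, w τ| + |b v - b s| :=
                    abs_add_le _ _
                _ ≤ Iw + Vi := add_le_add h2 h3
        _ = M * δ * |w s| + (M * Iw + M * Vi) := by ring
    -- integrate the bound
    have hbnd : |Ei i| ≤ M * δ * Iw + (v - u) * (M * Iw + M * Vi) := by
      rw [hEieq]
      calc |∫ s in u..v, φ s| ≤ ∫ s in u..v, |φ s| :=
            intervalIntegral.abs_integral_le_integral_abs huv.le
        _ ≤ ∫ s in u..v, (M * δ * |w s| + (M * Iw + M * Vi)) := by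
            apply intervalIntegral.integral_mono_on huv.le hφint.abs
            · exact ((hint_absw i hi).const_mul _).add _root_.intervalIntegrable_const
            · exact hφb
        _ = M * δ * Iw + (v - u) * (M * Iw + M * Vi) := by
            rw [intervalIntegral.integral_add ((hint_absw i hi).const_mul _)
              intervalIntegrable_const, intervalIntegral.integral_const_mul,
              intervalIntegral.integral_const]
            simp [smul_eq_mul]
            rfl
    have : (v - u) * (M * Iw + M * Vi) ≤ δ * (M * Iw + M * Vi) := by
      apply mul_le_mul_of_nonneg_right hd.le
      nlinarith
    calc |Ei i| ≤ M * δ * Iw + δ * (M * Iw + M * Vi) := by linarith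
      _ = M * δ * (2 * Iw + Vi) := by ring
  -- sum the variations
  have hVsum : ∑ i ∈ Finset.range n, (eVariationOn b (Icc (t i) (t (i+1)))).toReal = Vt := by
    have key : ∀ j, j ≤ n →
        ∑ i ∈ Finset.range j, eVariationOn b (Icc (t i) (t (i+1)))
          = eVariationOn b (Icc (t 0) (t j)) := by
      intro j hj
      induction j with
      | zero =>
        rw [Finset.sum_range_zero, eq_comm]
        apply eVariationOn.subsingleton
        rw [Set.Icc_self]
        exact Set.subsingleton_singleton
      | succ j ih =>
        rw [Finset.sum_range_succ, ih (Nat.le_of_succ_le hj)]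
        have h := eVariationOn.Icc_add_Icc b (s := (univ : Set ℝ))
          (hmono 0 j (Nat.zero_le _) (Nat.le_of_succ_le hj))
          (hlt j (Nat.lt_of_succ_le hj)).le (mem_univ _)
        simpa [Set.univ_inter] using h
    have hfin : ∀ i ∈ Finset.range n, eVariationOn b (Icc (t i) (t (i+1))) ≠ ⊤ := by
      intro i hi
      rw [Finset.mem_range] at hi
      refine ne_top_of_le_ne_top hbv (eVariationOn.mono b ?_)
      exact Icc_subset_Icc (hmem i hi.le).1 (hmem (i+1) hi).2
    rw [hVt, ← ht0, ← htn, ← key n le_rfl, ENNReal.toReal_sum hfin]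
  have hWsum : ∑ i ∈ Finset.range n, (∫ s in t i..t (i+1), |w s|) = W := by
    calc ∑ i ∈ Finset.range n, (∫ s in t i..t (i+1), |w s|)
        = ∫ s in (t 0)..(t n), |w s| :=
          intervalIntegral.sum_integral_adjacent_intervals hint_absw
      _ = W := by rw [ht0, htn]
  -- final estimate
  rw [hsum]
  calc |∑ i ∈ Finset.range n, Ei i| ≤ ∑ i ∈ Finset.range n, |Ei i| :=
        Finset.abs_sum_le_sum_abs _ _
    _ ≤ ∑ i ∈ Finset.range n, M * δ * (2 * (∫ s in t i..t (i+1), |w s|)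
          + (eVariationOn b (Icc (t i) (t (i+1)))).toReal) :=
        Finset.sum_le_sum (fun i hi => hEbound i (Finset.mem_range.mp hi))
    _ = M * δ * (2 * W + Vt) := by
        rw [← Finset.mul_sum, Finset.sum_add_distrib, ← Finset.mul_sum, hVsum, hWsum]
    _ = δ * (K - 1) := by rw [hK]; ring
    _ < ε := by
        rw [hδ]
        rw [div_mul_eq_mul_div, div_lt_iff₀ hKpos]
        nlinarith

lemma clm_comp_intervalIntegrable {E F : Type*} [NormedAddCommGroup E] [NormedSpace ℝ E]
    [NormedAddCommGroup F] [NormedSpace ℝ F] {f : ℝ → E} {a b : ℝ}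
    {μ : MeasureTheory.Measure ℝ} (L : E →L[ℝ] F) (hf : IntervalIntegrable f μ a b) :
    IntervalIntegrable (fun t => L (f t)) μ a b :=
  ⟨L.integrable_comp hf.1, L.integrable_comp hf.2⟩

lemma mulVec_dot {p q : ℕ} (M : Matrix (Fin p) (Fin q) ℝ) (y : Fin q → ℝ) (x : Fin p → ℝ) :
    M.mulVec y ⬝ᵥ x = y ⬝ᵥ Mᵀ.mulVec x := by
  simp only [Matrix.mulVec, dotProduct, Matrix.transpose_apply, Finset.sum_mul,
    Finset.mul_sum]
  rw [Finset.sum_comm]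
  apply Finset.sum_congr rfl
  intro j _
  apply Finset.sum_congr rfl
  intro i _
  ring


set_option maxHeartbeats 1000000 in
/-- pathwise integration by parts. If `Y` is `C¹` solving
`dY/dt = -A Y - H U`, and `X_t = X_0 + ∫_0^t Aᵀ X_τ dτ + B_t` with `B` of
bounded variation, `B_0 = 0`, then
`Y_Tᵀ X_T = Y_0ᵀ X_0 - ∫_0^T U_tᵀ Hᵀ X_t dt + ∫_0^T Y_tᵀ dB_t`, the last
integral being a Riemann–Stieltjes integral (which exists since the continuous
`Y` has no common discontinuities with `B`). -/
theorem stmt15 {d m : ℕ} (A : Matrix (Fin d) (Fin d) ℝ)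
    (H : Matrix (Fin d) (Fin m) ℝ) (T : ℝ) (hT : 0 < T)
    (U : ℝ → Fin m → ℝ) (hU : ContinuousOn U (Set.Icc 0 T))
    (Y : ℝ → Fin d → ℝ)
    (hY : ∀ t ∈ Set.Icc (0 : ℝ) T,
      HasDerivAt Y (-(A.mulVec (Y t)) - H.mulVec (U t)) t)
    (hYcont : ContinuousOn Y (Set.Icc 0 T))
    (B : ℝ → Fin d → ℝ) (hB0 : B 0 = 0)
    (hBV : BoundedVariationOn B (Set.Icc 0 T))
    (X : ℝ → Fin d → ℝ)
    (hXint : IntervalIntegrable X MeasureTheory.volume 0 T)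
    (hXeq : ∀ t ∈ Set.Icc (0 : ℝ) T,
      X t = X 0 + (∫ τ in (0 : ℝ)..t, Aᵀ.mulVec (X τ)) + B t) :
    ∃ I : Fin d → ℝ,
      (∀ k, IsRSIntegral (fun t => Y t k) (fun t => B t k) 0 T (I k)) ∧
      Y T ⬝ᵥ X T =
        Y 0 ⬝ᵥ X 0 - (∫ t in (0 : ℝ)..T, U t ⬝ᵥ Hᵀ.mulVec (X t)) +
          ∑ k, I k := by
  have huIcc : uIcc (0:ℝ) T = Icc 0 T := Set.uIcc_of_le hT.le
  set g : ℝ → Fin d → ℝ := fun t => -(A.mulVec (Y t)) - H.mulVec (U t) with hgdef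
  -- continuity of g
  have hAY : ContinuousOn (fun t => A.mulVec (Y t)) (Icc 0 T) := by
    have hc : Continuous (A.mulVecLin : (Fin d → ℝ) →ₗ[ℝ] (Fin d → ℝ)) :=
      LinearMap.continuous_of_finiteDimensional _
    have := hc.comp_continuousOn hYcont
    exact this
  have hHU : ContinuousOn (fun t => H.mulVec (U t)) (Icc 0 T) := by
    have hc : Continuous (H.mulVecLin : (Fin m → ℝ) →ₗ[ℝ] (Fin d → ℝ)) :=
      LinearMap.continuous_of_finiteDimensional _
    have := hc.comp_continuousOn hU
    exact this
  have hgcont : ContinuousOn g (Icc 0 T) := (hAY.neg).sub hHU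
  -- uniform bound on g
  obtain ⟨C, hC⟩ := (isCompact_Icc).exists_bound_of_continuousOn hgcont
  set M : ℝ := max C 0 with hM
  have hM0 : 0 ≤ M := le_max_right _ _
  have hgM : ∀ k, ∀ t ∈ Icc (0:ℝ) T, |g t k| ≤ M := by
    intro k t ht
    calc |g t k| = ‖g t k‖ := (Real.norm_eq_abs _).symm
      _ ≤ ‖g t‖ := norm_le_pi_norm (g t) k
      _ ≤ C := hC t ht
      _ ≤ M := le_max_left _ _
  -- componentwise facts
  have hfk : ∀ k, ∀ t ∈ Icc (0:ℝ) T, HasDerivAt (fun s => Y s k) (g t k) t :=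
    fun k t ht => hasDerivAt_pi.mp (hY t ht) k
  have hgkc : ∀ k, ContinuousOn (fun t => g t k) (Icc (0:ℝ) T) :=
    fun k => (continuous_apply k).comp_continuousOn hgcont
  have hxk : ∀ k, IntervalIntegrable (fun t => X t k) MeasureTheory.volume 0 T :=
    fun k => clm_comp_intervalIntegrable
      (ContinuousLinearMap.proj (R := ℝ) (φ := fun _ : Fin d => ℝ) k) hXint
  have hAXint : IntervalIntegrable (fun τ => Aᵀ.mulVec (X τ)) MeasureTheory.volume 0 T := by
    have := clm_comp_intervalIntegrable
      (LinearMap.toContinuousLinearMap (Matrix.mulVecLin Aᵀ)) hXint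
    simpa only [LinearMap.coe_toContinuousLinearMap', Matrix.mulVecLin_apply] using this
  have hwk : ∀ k, IntervalIntegrable (fun t => Aᵀ.mulVec (X t) k) MeasureTheory.volume 0 T := by
    intro k
    have h0 : IntervalIntegrable (fun t => ∑ j, Aᵀ k j * X t j) MeasureTheory.volume 0 T := by
      have := IntervalIntegrable.sum (μ := MeasureTheory.volume) (a := (0:ℝ)) (b := T)
        Finset.univ (f := fun j (t : ℝ) => Aᵀ k j * X t j)
        (fun j _ => (hxk j).const_mul _)
      have heq : (∑ j : Fin d, fun t : ℝ => Aᵀ k j * X t j)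
          = fun t => ∑ j, Aᵀ k j * X t j := by
        funext t
        simp
      rwa [heq] at this
    simpa [Matrix.mulVec, dotProduct] using h0
  have hbeqk : ∀ k, ∀ t ∈ Icc (0:ℝ) T,
      X t k = X 0 k + (∫ τ in (0:ℝ)..t, Aᵀ.mulVec (X τ) k) + B t k := by
    intro k t ht
    have h1 := congrFun (hXeq t ht) k
    have hsubint : IntervalIntegrable (fun τ => Aᵀ.mulVec (X τ)) MeasureTheory.volume 0 t := by
      apply hAXint.mono_set
      rw [Set.uIcc_of_le ht.1, huIcc]
      exact Icc_subset_Icc le_rfl ht.2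
    have h2 := (ContinuousLinearMap.proj (R := ℝ) (φ := fun _ : Fin d => ℝ)
      k).intervalIntegral_comp_comm hsubint
    simp only [ContinuousLinearMap.proj_apply] at h2
    simp only [Pi.add_apply] at h1
    rw [h1, ← h2]
  have hbvk : ∀ k, BoundedVariationOn (fun t => B t k) (Icc (0:ℝ) T) := by
    intro k
    exact ((LipschitzWith.eval (α := fun _ : Fin d => ℝ) k).lipschitzOnWith
      (s := Set.univ)).comp_boundedVariationOn (Set.mapsTo_univ _ _) hBV
  -- the RS integrals
  refine ⟨fun k => Y T k * X T k - Y 0 k * X 0 k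
      - (∫ t in (0:ℝ)..T, g t k * X t k)
      - (∫ t in (0:ℝ)..T, Y t k * Aᵀ.mulVec (X t) k), fun k => ?_, ?_⟩
  · exact rs_aux hT hM0 (hfk k) (hgkc k) (fun t ht => hgM k t ht) (hxk k) (hwk k)
      (hbeqk k) (hbvk k)
  -- the identity
  have hYk : ∀ k, ContinuousOn (fun t => Y t k) (Icc (0:ℝ) T) :=
    fun k => (continuous_apply k).comp_continuousOn hYcont
  have hint_gx : ∀ k, IntervalIntegrable (fun t => g t k * X t k) MeasureTheory.volume 0 T :=
    fun k => (hxk k).continuousOn_mul (huIcc ▸ hgkc k)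
  have hint_yw : ∀ k, IntervalIntegrable (fun t => Y t k * Aᵀ.mulVec (X t) k)
      MeasureTheory.volume 0 T :=
    fun k => (hwk k).continuousOn_mul (huIcc ▸ hYk k)
  have hint_gX : IntervalIntegrable (fun t => g t ⬝ᵥ X t) MeasureTheory.volume 0 T := by
    have := IntervalIntegrable.sum (μ := MeasureTheory.volume) (a := (0:ℝ)) (b := T)
      Finset.univ (f := fun k (t : ℝ) => g t k * X t k) (fun k _ => hint_gx k)
    have heq : (∑ k : Fin d, fun t : ℝ => g t k * X t k)
        = fun t => g t ⬝ᵥ X t := by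
      funext t
      simp [dotProduct]
    rwa [heq] at this
  have hint_YAX : IntervalIntegrable (fun t => Y t ⬝ᵥ Aᵀ.mulVec (X t))
      MeasureTheory.volume 0 T := by
    have := IntervalIntegrable.sum (μ := MeasureTheory.volume) (a := (0:ℝ)) (b := T)
      Finset.univ (f := fun k (t : ℝ) => Y t k * Aᵀ.mulVec (X t) k) (fun k _ => hint_yw k)
    have heq : (∑ k : Fin d, fun t : ℝ => Y t k * Aᵀ.mulVec (X t) k)
        = fun t => Y t ⬝ᵥ Aᵀ.mulVec (X t) := by
      funext t
      simp [dotProduct]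
    rwa [heq] at this
  have hsum1 : ∑ k, (∫ t in (0:ℝ)..T, g t k * X t k) = ∫ t in (0:ℝ)..T, g t ⬝ᵥ X t := by
    rw [← intervalIntegral.integral_finset_sum (fun k _ => hint_gx k)]
    rfl
  have hsum2 : ∑ k, (∫ t in (0:ℝ)..T, Y t k * Aᵀ.mulVec (X t) k)
      = ∫ t in (0:ℝ)..T, Y t ⬝ᵥ Aᵀ.mulVec (X t) := by
    rw [← intervalIntegral.integral_finset_sum (fun k _ => hint_yw k)]
    rfl
  have hpt : ∀ t, -(g t ⬝ᵥ X t) - Y t ⬝ᵥ Aᵀ.mulVec (X t) = U t ⬝ᵥ Hᵀ.mulVec (X t) := by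
    intro t
    simp only [hgdef, sub_dotProduct, neg_dotProduct]
    rw [mulVec_dot A (Y t) (X t), mulVec_dot H (U t) (X t)]
    ring
  have hUint : (∫ t in (0:ℝ)..T, U t ⬝ᵥ Hᵀ.mulVec (X t))
      = -(∫ t in (0:ℝ)..T, g t ⬝ᵥ X t) - ∫ t in (0:ℝ)..T, Y t ⬝ᵥ Aᵀ.mulVec (X t) := by
    have h1 : (∫ t in (0:ℝ)..T, U t ⬝ᵥ Hᵀ.mulVec (X t))
        = ∫ t in (0:ℝ)..T, (-(g t ⬝ᵥ X t) - Y t ⬝ᵥ Aᵀ.mulVec (X t)) :=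
      intervalIntegral.integral_congr (fun t _ => (hpt t).symm)
    have hnegint : IntervalIntegrable (fun t => -(g t ⬝ᵥ X t)) MeasureTheory.volume 0 T :=
      hint_gX.neg
    rw [h1, intervalIntegral.integral_sub hnegint hint_YAX,
      intervalIntegral.integral_neg]
  have hdot : ∀ (v w : Fin d → ℝ), v ⬝ᵥ w = ∑ k, v k * w k := fun _ _ => rfl
  rw [hdot (Y T) (X T), hdot (Y 0) (X 0), hUint]
  rw [Finset.sum_sub_distrib, Finset.sum_sub_distrib, Finset.sum_sub_distrib, hsum1, hsum2]
  ring

end AuxRS
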